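/- For any i_p, i_p̄ ∈ I and j, j̄ ∉ I with I = {i_1 < ... < i_k} ⊂ [1,n], the identity ε_{j j̄} + ε_{i_p̄ i_p} − ε_{j i_p} − ε_{i_p̄ j̄} = 2 s_=(i_p, j, i_p̄, j̄) holds, where ε_{ab} = 0 if a ≤ k < b or b ≤ k < a, and ε_{ab} = sign(a−b) otherwise. -/

import Mathlib

/-- The counterclockwise cyclic distance from `a` to `b` among the boundary points
`b_1, …, b_n` (labelled counterclockwise). -/
def cdist (n a b : ℕ) : ℕ := (b + n - a) % n

/-- `btw n a b c` means `a ≺ b ≺ c`: `b` lies strictly between `a` and `c`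
in the counterclockwise cyclic order on `b_1, …, b_n`. -/
def btw (n a b c : ℕ) : Prop := 0 < cdist n a b ∧ cdist n a b < cdist n a c

/-- `ord4 n a b c d` means `a ≺ b ≺ c ≺ d` in the counterclockwise cyclic order. -/
def ord4 (n a b c d : ℕ) : Prop :=
  0 < cdist n a b ∧ cdist n a b < cdist n a c ∧ cdist n a c < cdist n a d

open Classical in
/-- The function `s_=(i,j,i',j')` of the paper. -/
noncomputable def sEq (n i j i' j' : ℕ) : ℚ :=
  if ord4 n i i' j' j then 1
  else if ord4 n i' i j j' then -1
  else if (i = i' ∧ btw n i j' j) ∨ (j = j' ∧ btw n i i' j) then 1/2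
  else if (i = i' ∧ btw n i j j') ∨ (j = j' ∧ btw n i' i j) then -1/2
  else 0

open Classical in
/-- The function `s_×(i,j,i',j')` of the paper. -/
noncomputable def sCross (n i j i' j' : ℕ) : ℚ :=
  if ord4 n i' i j' j then 1
  else if ord4 n i i' j j' then -1
  else if (i = i' ∧ btw n i j' j) ∨ (j = j' ∧ btw n i' i j) then 1/2
  else if (i = i' ∧ btw n i j j') ∨ (j = j' ∧ btw n i i' j) then -1/2
  else 0

open Classical in
/-- `ε_{ab}`: zero if exactly one of `a, b` lies in `[1,k]`, and `sign(a−b)` otherwise. -/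
noncomputable def epsf (k a b : ℕ) : ℚ :=
  if (a ≤ k ∧ k < b) ∨ (b ≤ k ∧ k < a) then 0 else ((Int.sign ((a : ℤ) - (b : ℤ))) : ℚ)

lemma cdist_spec (n a b : ℕ) (ha : 1 ≤ a) (han : a ≤ n) (hb : 1 ≤ b) (hbn : b ≤ n) :
    (a ≤ b ∧ cdist n a b = b - a) ∨ (b < a ∧ cdist n a b = b + n - a) := by
  unfold cdist
  rcases le_or_gt a b with h | h
  · left
    refine ⟨h, ?_⟩
    have e : b + n - a = (b - a) + n := by omega
    rw [e, Nat.add_mod_right]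
    exact Nat.mod_eq_of_lt (by omega)
  · right
    exact ⟨h, Nat.mod_eq_of_lt (by omega)⟩

lemma epsf_eq (k a b : ℕ) :
    epsf k a b = if (a ≤ k ∧ k < b) ∨ (b ≤ k ∧ k < a) then 0
      else if b < a then 1 else if a < b then -1 else 0 := by
  unfold epsf
  split_ifs with h1 h2 h3
  · rfl
  · rw [Int.sign_eq_one_iff_pos.2 (by omega : (0:ℤ) < (a:ℤ) - (b:ℤ))]; norm_num
  · rw [Int.sign_eq_neg_one_iff_neg.2 (by omega : (a:ℤ) - (b:ℤ) < 0)]; norm_num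
  · rw [show (a:ℤ) - (b:ℤ) = 0 by omega]; norm_num

lemma cdist_pos_iff (n a b : ℕ) (ha : 1 ≤ a) (han : a ≤ n) (hb : 1 ≤ b) (hbn : b ≤ n) :
    0 < cdist n a b ↔ a ≠ b := by
  rcases cdist_spec n a b ha han hb hbn with ⟨h, e⟩ | ⟨h, e⟩ <;> rw [e] <;> omega

lemma cdist_lt_iff (n a b c : ℕ) (ha : 1 ≤ a) (han : a ≤ n) (hb : 1 ≤ b) (hbn : b ≤ n)
    (hc : 1 ≤ c) (hcn : c ≤ n) :
    cdist n a b < cdist n a c ↔ ((a ≤ b ∧ c < a) ∨ (b < c ∧ (a ≤ b ∨ c < a))) := by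
  rcases cdist_spec n a b ha han hb hbn with ⟨h, e⟩ | ⟨h, e⟩ <;>
    rcases cdist_spec n a c ha han hc hcn with ⟨h', e'⟩ | ⟨h', e'⟩ <;>
      rw [e, e'] <;> omega


lemma ord4_iff (n a b c d : ℕ) (ha : 1 ≤ a) (han : a ≤ n) (hb : 1 ≤ b) (hbn : b ≤ n)
    (hc : 1 ≤ c) (hcn : c ≤ n) (hd : 1 ≤ d) (hdn : d ≤ n) :
    ord4 n a b c d ↔ a ≠ b ∧ ((a ≤ b ∧ c < a) ∨ (b < c ∧ (a ≤ b ∨ c < a))) ∧ ((a ≤ c ∧ d < a) ∨ (c < d ∧ (a ≤ c ∨ d < a))) := by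
  unfold ord4
  rw [cdist_pos_iff n a b ha han hb hbn, cdist_lt_iff n a b c ha han hb hbn hc hcn,
    cdist_lt_iff n a c d ha han hc hcn hd hdn]

lemma btw_iff_nat (n a b c : ℕ) (ha : 1 ≤ a) (han : a ≤ n) (hb : 1 ≤ b) (hbn : b ≤ n)
    (hc : 1 ≤ c) (hcn : c ≤ n) :
    _root_.btw n a b c ↔ a ≠ b ∧ ((a ≤ b ∧ c < a) ∨ (b < c ∧ (a ≤ b ∨ c < a))) := by
  unfold _root_.btw
  rw [cdist_pos_iff n a b ha han hb hbn, cdist_lt_iff n a b c ha han hb hbn hc hcn]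

lemma epsf_cases (k a b : ℕ) :
    (epsf k a b = 1 ∧ ¬((a ≤ k ∧ k < b) ∨ (b ≤ k ∧ k < a)) ∧ b < a) ∨
    (epsf k a b = -1 ∧ ¬((a ≤ k ∧ k < b) ∨ (b ≤ k ∧ k < a)) ∧ a < b) ∨
    (epsf k a b = 0 ∧ (((a ≤ k ∧ k < b) ∨ (b ≤ k ∧ k < a)) ∨ a = b)) := by
  rw [epsf_eq]
  split_ifs with h1 h2 h3 <;> [skip; skip; skip; skip] <;>
    first
      | exact Or.inr (Or.inr ⟨rfl, Or.inl h1⟩)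
      | exact Or.inl ⟨rfl, h1, h2⟩
      | exact Or.inr (Or.inl ⟨rfl, h1, h3⟩)
      | exact Or.inr (Or.inr ⟨rfl, Or.inr (by omega)⟩)

set_option maxHeartbeats 0 in
lemma sEq_spec (n i j i' j' : ℕ) (hi : 1 ≤ i) (hin : i ≤ n) (hj : 1 ≤ j) (hjn : j ≤ n)
    (hi' : 1 ≤ i') (hin' : i' ≤ n) (hj' : 1 ≤ j') (hjn' : j' ≤ n)
    (n1 : j ≠ i) (n2 : j ≠ i') (n3 : j' ≠ i) (n4 : j' ≠ i') :
    (sEq n i j i' j' = 1 ∧ (i ≠ i' ∧ ((i ≤ i' ∧ j' < i) ∨ (i' < j' ∧ (i ≤ i' ∨ j' < i))) ∧ ((i ≤ j' ∧ j < i) ∨ (j' < j ∧ (i ≤ j' ∨ j < i))))) ∨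
    (sEq n i j i' j' = -1 ∧ (i' ≠ i ∧ ((i' ≤ i ∧ j < i') ∨ (i < j ∧ (i' ≤ i ∨ j < i'))) ∧ ((i' ≤ j ∧ j' < i') ∨ (j < j' ∧ (i' ≤ j ∨ j' < i'))))) ∨
    (sEq n i j i' j' = 1/2 ∧ ((i = i' ∧ (i ≠ j' ∧ ((i ≤ j' ∧ j < i) ∨ (j' < j ∧ (i ≤ j' ∨ j < i))))) ∨ (j = j' ∧ (i ≠ i' ∧ ((i ≤ i' ∧ j < i) ∨ (i' < j ∧ (i ≤ i' ∨ j < i))))))) ∨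
    (sEq n i j i' j' = -1/2 ∧ ((i = i' ∧ (i ≠ j ∧ ((i ≤ j ∧ j' < i) ∨ (j < j' ∧ (i ≤ j ∨ j' < i))))) ∨ (j = j' ∧ (i' ≠ i ∧ ((i' ≤ i ∧ j < i') ∨ (i < j ∧ (i' ≤ i ∨ j < i'))))))) ∨
    (sEq n i j i' j' = 0 ∧ ((i < j ∧ i = i' ∧ i < j' ∧ i' < j ∧ j = j' ∧ i' < j') ∨
      (i < j ∧ i < i' ∧ i < j' ∧ j < i' ∧ j < j' ∧ i' < j') ∨
      (i < j ∧ i < i' ∧ i < j' ∧ i' < j ∧ j < j' ∧ i' < j') ∨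
      (i < j ∧ i < i' ∧ i < j' ∧ j < i' ∧ j' < j ∧ j' < i') ∨
      (i < j ∧ i < i' ∧ i < j' ∧ i' < j ∧ j' < j ∧ j' < i') ∨
      (j < i ∧ i = i' ∧ j' < i ∧ j < i' ∧ j = j' ∧ j' < i') ∨
      (j < i ∧ i < i' ∧ i < j' ∧ j < i' ∧ j < j' ∧ j' < i') ∨
      (i < j ∧ i < i' ∧ j' < i ∧ j < i' ∧ j' < j ∧ j' < i') ∨
      (i < j ∧ i' < i ∧ i < j' ∧ i' < j ∧ j' < j ∧ i' < j') ∨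
      (i < j ∧ i < i' ∧ j' < i ∧ i' < j ∧ j' < j ∧ j' < i') ∨
      (j < i ∧ i' < i ∧ i < j' ∧ j < i' ∧ j < j' ∧ i' < j') ∨
      (j < i ∧ i < i' ∧ j' < i ∧ j < i' ∧ j < j' ∧ j' < i') ∨
      (j < i ∧ i' < i ∧ i < j' ∧ i' < j ∧ j < j' ∧ i' < j') ∨
      (i < j ∧ i' < i ∧ j' < i ∧ i' < j ∧ j' < j ∧ i' < j') ∨
      (j < i ∧ i' < i ∧ j' < i ∧ j < i' ∧ j < j' ∧ i' < j') ∨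
      (j < i ∧ i' < i ∧ j' < i ∧ i' < j ∧ j < j' ∧ i' < j') ∨
      (j < i ∧ i' < i ∧ j' < i ∧ j < i' ∧ j' < j ∧ j' < i') ∨
      (j < i ∧ i' < i ∧ j' < i ∧ i' < j ∧ j' < j ∧ j' < i'))) := by
  unfold sEq
  rw [ord4_iff n i i' j' j hi hin hi' hin' hj' hjn' hj hjn,
    ord4_iff n i' i j j' hi' hin' hi hin hj hjn hj' hjn',
    btw_iff_nat n i j' j hi hin hj' hjn' hj hjn,
    btw_iff_nat n i i' j hi hin hi' hin' hj hjn,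
    btw_iff_nat n i j j' hi hin hj hjn hj' hjn',
    btw_iff_nat n i' i j hi' hin' hi hin hj hjn]
  split_ifs with h1 h2 h3 h4
  · exact Or.inl ⟨rfl, h1⟩
  · exact Or.inr (Or.inl ⟨rfl, h2⟩)
  · exact Or.inr (Or.inr (Or.inl ⟨rfl, h3⟩))
  · exact Or.inr (Or.inr (Or.inr (Or.inl ⟨rfl, h4⟩)))
  · refine Or.inr (Or.inr (Or.inr (Or.inr ⟨rfl, ?_⟩)))
    rcases lt_trichotomy i i' with hA | hA | hA <;>
      rcases lt_trichotomy j j' with hB | hB | hB <;>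
        rcases lt_trichotomy i j with hC | hC | hC <;>
          rcases lt_trichotomy i' j' with hD | hD | hD <;>
            rcases lt_trichotomy i j' with hE | hE | hE <;>
              rcases lt_trichotomy i' j with hF | hF | hF <;>
            first
              | exact (Or.inl ⟨hC, hA, hE, hF, hB, hD⟩)
              | exact (Or.inr (Or.inl ⟨hC, hA, hE, hF, hB, hD⟩))
              | exact (Or.inr (Or.inr (Or.inl ⟨hC, hA, hE, hF, hB, hD⟩)))
              | exact (Or.inr (Or.inr (Or.inr (Or.inl ⟨hC, hA, hE, hF, hB, hD⟩))))
              | exact (Or.inr (Or.inr (Or.inr (Or.inr (Or.inl ⟨hC, hA, hE, hF, hB, hD⟩)))))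
              | exact (Or.inr (Or.inr (Or.inr (Or.inr (Or.inr (Or.inl ⟨hC, hA, hE, hF, hB, hD⟩))))))
              | exact (Or.inr (Or.inr (Or.inr (Or.inr (Or.inr (Or.inr (Or.inl ⟨hC, hA, hE, hF, hB, hD⟩)))))))
              | exact (Or.inr (Or.inr (Or.inr (Or.inr (Or.inr (Or.inr (Or.inr (Or.inl ⟨hC, hA, hE, hF, hB, hD⟩))))))))
              | exact (Or.inr (Or.inr (Or.inr (Or.inr (Or.inr (Or.inr (Or.inr (Or.inr (Or.inl ⟨hC, hA, hE, hF, hB, hD⟩)))))))))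
              | exact (Or.inr (Or.inr (Or.inr (Or.inr (Or.inr (Or.inr (Or.inr (Or.inr (Or.inr (Or.inl ⟨hC, hA, hE, hF, hB, hD⟩))))))))))
              | exact (Or.inr (Or.inr (Or.inr (Or.inr (Or.inr (Or.inr (Or.inr (Or.inr (Or.inr (Or.inr (Or.inl ⟨hC, hA, hE, hF, hB, hD⟩)))))))))))
              | exact (Or.inr (Or.inr (Or.inr (Or.inr (Or.inr (Or.inr (Or.inr (Or.inr (Or.inr (Or.inr (Or.inr (Or.inl ⟨hC, hA, hE, hF, hB, hD⟩))))))))))))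
              | exact (Or.inr (Or.inr (Or.inr (Or.inr (Or.inr (Or.inr (Or.inr (Or.inr (Or.inr (Or.inr (Or.inr (Or.inr (Or.inl ⟨hC, hA, hE, hF, hB, hD⟩)))))))))))))
              | exact (Or.inr (Or.inr (Or.inr (Or.inr (Or.inr (Or.inr (Or.inr (Or.inr (Or.inr (Or.inr (Or.inr (Or.inr (Or.inr (Or.inl ⟨hC, hA, hE, hF, hB, hD⟩))))))))))))))
              | exact (Or.inr (Or.inr (Or.inr (Or.inr (Or.inr (Or.inr (Or.inr (Or.inr (Or.inr (Or.inr (Or.inr (Or.inr (Or.inr (Or.inr (Or.inl ⟨hC, hA, hE, hF, hB, hD⟩)))))))))))))))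
              | exact (Or.inr (Or.inr (Or.inr (Or.inr (Or.inr (Or.inr (Or.inr (Or.inr (Or.inr (Or.inr (Or.inr (Or.inr (Or.inr (Or.inr (Or.inr (Or.inl ⟨hC, hA, hE, hF, hB, hD⟩))))))))))))))))
              | exact (Or.inr (Or.inr (Or.inr (Or.inr (Or.inr (Or.inr (Or.inr (Or.inr (Or.inr (Or.inr (Or.inr (Or.inr (Or.inr (Or.inr (Or.inr (Or.inr (Or.inl ⟨hC, hA, hE, hF, hB, hD⟩)))))))))))))))))
              | exact (Or.inr (Or.inr (Or.inr (Or.inr (Or.inr (Or.inr (Or.inr (Or.inr (Or.inr (Or.inr (Or.inr (Or.inr (Or.inr (Or.inr (Or.inr (Or.inr (Or.inr (⟨hC, hA, hE, hF, hB, hD⟩))))))))))))))))))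
              | (exfalso; omega)


set_option maxHeartbeats 0 in
/-- For any sources `i_p, i_p̄ ∈ I` and any `j, j̄ ∉ I`,
`ε_{j j̄} + ε_{i_p̄ i_p} − ε_{j i_p} − ε_{i_p̄ j̄} = 2 s_=(i_p, j, i_p̄, j̄)`. -/
theorem eps_eq_two_sEq (n k : ℕ) (hk : k ≤ n)
    (I : Finset ℕ) (hI : I ⊆ Finset.Icc 1 n) (hcard : I.card = k)
    (ip ipbar : ℕ) (hip : ip ∈ I) (hipbar : ipbar ∈ I)
    (j jbar : ℕ) (hj : j ∈ Finset.Icc 1 n) (hjbar : jbar ∈ Finset.Icc 1 n)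
    (hjI : j ∉ I) (hjbarI : jbar ∉ I) :
    epsf k j jbar + epsf k ipbar ip - epsf k j ip - epsf k ipbar jbar =
      2 * sEq n ip j ipbar jbar := by
  obtain ⟨a1, a2⟩ := Finset.mem_Icc.1 (hI hip)
  obtain ⟨b1, b2⟩ := Finset.mem_Icc.1 (hI hipbar)
  obtain ⟨d1, d2⟩ := Finset.mem_Icc.1 hj
  obtain ⟨e1, e2⟩ := Finset.mem_Icc.1 hjbar
  have ne1 : j ≠ ip := fun h => hjI (h ▸ hip)
  have ne2 : j ≠ ipbar := fun h => hjI (h ▸ hipbar)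
  have ne3 : jbar ≠ ip := fun h => hjbarI (h ▸ hip)
  have ne4 : jbar ≠ ipbar := fun h => hjbarI (h ▸ hipbar)
  clear hI hcard hjI hjbarI hip hipbar hj hjbar
  rcases epsf_cases k j jbar with ⟨E1, h1⟩ | ⟨E1, h1⟩ | ⟨E1, h1⟩ <;>
  rcases epsf_cases k ipbar ip with ⟨E2, h2⟩ | ⟨E2, h2⟩ | ⟨E2, h2⟩ <;>
  rcases epsf_cases k j ip with ⟨E3, h3⟩ | ⟨E3, h3⟩ | ⟨E3, h3⟩ <;>
  rcases epsf_cases k ipbar jbar with ⟨E4, h4⟩ | ⟨E4, h4⟩ | ⟨E4, h4⟩ <;>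
  rcases sEq_spec n ip j ipbar jbar a1 a2 d1 d2 b1 b2 e1 e2 ne1 ne2 ne3 ne4 with
    ⟨E5, h5⟩ | ⟨E5, h5⟩ | ⟨E5, h5⟩ | ⟨E5, h5⟩ | ⟨E5, h5⟩ <;>
  rw [E1, E2, E3, E4, E5] <;>
  norm_num <;> omega
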